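/- Let F be a free group with finite symmetric free generating set S, and let G = (V,E) be a finite directed multigraph with edges labeled by S, defining the graph subshift X ⊆ V^F (x ∈ X iff for all f ∈ F and s ∈ S there is an edge from x(f) to x(fs) labeled s). If there exists a nontrivial weight W on G with W(v₁) > 0 for some vertex v₁, then there exists a periodic element x ∈ X (i.e., the stabilizer {f ∈ F : σ_f x = x} has finite index in F) with x(id) = v₁. -/

import Mathlib

/-- The group element of the free group corresponding to a label: a free generator
or the inverse of one.  `ι × Bool` models the symmetric free generating set `S`. -/
def genElem {ι : Type} (l : ι × Bool) : FreeGroup ι :=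
  if l.2 then FreeGroup.of l.1 else (FreeGroup.of l.1)⁻¹

/-- The formal inverse of a label in the symmetric generating set. -/
def labInv {ι : Type} (l : ι × Bool) : ι × Bool := (l.1, !l.2)

/-- Membership in the graph subshift `X ⊆ V^F` determined by the labeled graph `E`:
for every `f` and every generator label `l` there is an edge from `x f` to `x (f * s)`
labeled `l`. -/
def InSubshift {ι V : Type} (E : V → V → ι × Bool → Prop) (x : FreeGroup ι → V) : Prop :=
  ∀ (f : FreeGroup ι) (l : ι × Bool), E (x f) (x (f * genElem l)) l

open Finset

private noncomputable def castFn {α : Type} (y : α → ℚ) : α → ℝ := fun a => (y a : ℝ)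

private lemma span_rat_solutions' {α : Type} [Fintype α] (φs : List (α → ℚ)) :
    ∀ x : α → ℝ, (∀ φ ∈ φs, ∑ a, (φ a : ℝ) * x a = 0) →
      x ∈ Submodule.span ℝ (castFn '' {y : α → ℚ | ∀ φ ∈ φs, ∑ a, φ a * y a = 0}) := by
  classical
  induction φs with
  | nil =>
    intro x _
    have hx := pi_eq_sum_univ x
    rw [hx]
    refine Submodule.sum_mem _ fun i _ => Submodule.smul_mem _ _ (Submodule.subset_span ?_)
    exact ⟨fun j => if i = j then 1 else 0, by simp, by funext j; simp [castFn, apply_ite]⟩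
  | cons φ φs ih =>
    intro x hx
    have hxφ : ∑ a, (φ a : ℝ) * x a = 0 := hx φ List.mem_cons_self
    have hxT : x ∈ Submodule.span ℝ (castFn '' {y : α → ℚ | ∀ ψ ∈ φs, ∑ a, ψ a * y a = 0}) :=
      ih x fun ψ hψ => hx ψ (List.mem_cons_of_mem _ hψ)
    by_cases hc : ∀ y : α → ℚ, (∀ ψ ∈ φs, ∑ a, ψ a * y a = 0) → ∑ a, φ a * y a = 0
    · have hset : {y : α → ℚ | ∀ ψ ∈ φ :: φs, ∑ a, ψ a * y a = 0}
          = {y : α → ℚ | ∀ ψ ∈ φs, ∑ a, ψ a * y a = 0} := by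
        ext y
        simp only [Set.mem_setOf_eq, List.mem_cons]
        constructor
        · intro h ψ hψ; exact h ψ (Or.inr hψ)
        · rintro h ψ (rfl | hψ)
          · exact hc y h
          · exact h ψ hψ
      rw [hset]; exact hxT
    · push_neg at hc
      obtain ⟨u, hu, huφ⟩ := hc
      set c : ℚ := ∑ a, φ a * u a with hcdef
      -- dot product as a linear map
      set dφ : (α → ℝ) →ₗ[ℝ] ℝ := ∑ a : α, (φ a : ℝ) • (LinearMap.proj a) with hdφ
      have hdφ_apply : ∀ z : α → ℝ, dφ z = ∑ a, (φ a : ℝ) * z a := by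
        intro z
        simp [hdφ, LinearMap.sum_apply, smul_eq_mul]
      set P : (α → ℝ) →ₗ[ℝ] (α → ℝ) :=
        LinearMap.id - dφ.smulRight (((c : ℝ))⁻¹ • castFn u) with hP
      have hPapply : ∀ z, P z = z - (dφ z) • (((c:ℝ))⁻¹ • castFn u) := fun z => rfl
      have hPx : P x = x := by
        rw [hPapply, hdφ_apply, hxφ, zero_smul, sub_zero]
      have hmem := Submodule.apply_mem_span_image_of_mem_span P hxT
      rw [hPx] at hmem
      refine Submodule.span_mono ?_ hmem
      rintro z ⟨-, ⟨y, hy, rfl⟩, rfl⟩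
      have hcne : (c : ℝ) ≠ 0 := by exact_mod_cast huφ
      refine ⟨y - ((∑ a, φ a * y a) / c) • u, ?_, ?_⟩
      · have key : ∀ (ψ' : α → ℚ) (k : ℚ), ∑ a, ψ' a * (y a - k * u a)
            = (∑ a, ψ' a * y a) - k * ∑ a, ψ' a * u a := by
          intro ψ' k
          rw [Finset.mul_sum, ← Finset.sum_sub_distrib]
          exact Finset.sum_congr rfl fun a _ => by ring
        intro ψ hψ
        simp only [Pi.sub_apply, Pi.smul_apply, smul_eq_mul]
        rcases List.mem_cons.mp hψ with rfl | hψ'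
        · rw [key, ← hcdef, div_mul_cancel₀ _ huφ, sub_self]
        · rw [key, hy ψ hψ', hu ψ hψ', mul_zero, sub_zero]
      · rw [hPapply, hdφ_apply]
        have hdot : ∑ a, (φ a : ℝ) * castFn y a = ((∑ a, φ a * y a : ℚ) : ℝ) := by
          push_cast [castFn]; rfl
        funext a
        simp only [Pi.sub_apply, Pi.smul_apply, smul_eq_mul, castFn, hdot]
        push_cast
        ring

private lemma rat_point' {α : Type} [Fintype α] (φs : List (α → ℚ)) (x : α → ℝ)
    (hx : ∀ φ ∈ φs, ∑ a, (φ a : ℝ) * x a = 0) (hxnn : ∀ a, 0 ≤ x a) :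
    ∃ q : α → ℚ, (∀ φ ∈ φs, ∑ a, φ a * q a = 0) ∧ (∀ a, x a ≠ 0 → 0 < q a) := by
  classical
  have hspan := span_rat_solutions' φs x hx
  rw [Submodule.mem_span_set] at hspan
  obtain ⟨c, hcsupp, hcsum⟩ := hspan
  -- choose rational preimages
  have hych : ∀ m ∈ c.support, ∃ y : α → ℚ, (∀ φ ∈ φs, ∑ a, φ a * y a = 0) ∧
      (fun a => (y a : ℝ)) = m := by
    intro m hm
    obtain ⟨y, hy, hy2⟩ := hcsupp hm
    exact ⟨y, hy, hy2⟩
  choose Y hY1 hY2 using hych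
  -- the continuous combination map
  set g : (c.support → ℝ) → (α → ℝ) := fun d => ∑ m : c.support, d m • (m : α → ℝ) with hg
  have hgcont : Continuous g := by
    apply continuous_finset_sum
    intro m _
    exact (continuous_apply m).smul continuous_const
  set O : Set (α → ℝ) := ⋂ a : α, {z : α → ℝ | x a ≠ 0 → 0 < z a} with hO
  have hOopen : IsOpen O := by
    apply isOpen_iInter_of_finite
    intro a
    by_cases h : x a = 0
    · have : {z : α → ℝ | x a ≠ 0 → 0 < z a} = Set.univ := by
        ext z; simp [h]
      rw [this]; exact isOpen_univ
    · have : {z : α → ℝ | x a ≠ 0 → 0 < z a} = (fun z : α → ℝ => z a) ⁻¹' Set.Ioi 0 := by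
        ext z; simp [h]
      rw [this]; exact (continuous_apply a).isOpen_preimage _ isOpen_Ioi
  have hgx : g (fun m => c m) = x := by
    rw [hg, ← hcsum]
    rw [Finsupp.sum]
    exact Finset.sum_coe_sort c.support (fun m => c m • m)
  have hxO : x ∈ O := by
    rw [hO]
    refine Set.mem_iInter.2 fun a => fun h => lt_of_le_of_ne (hxnn a) (Ne.symm h)
  have hpre : IsOpen (g ⁻¹' O) := hOopen.preimage hgcont
  have hcin : (fun m : c.support => c ↑m) ∈ g ⁻¹' O := by rw [Set.mem_preimage, hgx]; exact hxO
  obtain ⟨ε, hε, hball⟩ := Metric.isOpen_iff.1 hpre _ hcin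
  -- pick rational approximations
  have hda : ∀ m : c.support, ∃ d : ℚ, |(d : ℝ) - c m| < ε := by
    intro m
    obtain ⟨d, hd1, hd2⟩ := exists_rat_btwn (show (c m : ℝ) - ε < c m by linarith)
    exact ⟨d, by rw [abs_sub_lt_iff]; constructor <;> linarith⟩
  choose d hd using hda
  have hdin : (fun m : c.support => (d m : ℝ)) ∈ Metric.ball (fun m : c.support => c ↑m) ε := by
    rw [Metric.mem_ball, dist_pi_lt_iff hε]
    intro m
    rw [Real.dist_eq]
    exact hd m
  have hgO : g (fun m => (d m : ℝ)) ∈ O := hball hdin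
  refine ⟨∑ m : c.support, d m • Y m m.2, ?_, ?_⟩
  · intro φ hφ
    have : ∀ m : c.support, ∑ a, φ a * (d m • Y m m.2) a = d m * ∑ a, φ a * Y m m.2 a := by
      intro m
      rw [Finset.mul_sum]
      exact Finset.sum_congr rfl fun a _ => by simp [Pi.smul_apply, smul_eq_mul]; ring
    calc ∑ a, φ a * (∑ m : c.support, d m • Y m m.2) a
        = ∑ a, ∑ m : c.support, φ a * (d m • Y m m.2) a := by
          refine Finset.sum_congr rfl fun a _ => ?_
          rw [Finset.sum_apply, Finset.mul_sum]
      _ = ∑ m : c.support, ∑ a, φ a * (d m • Y m m.2) a := Finset.sum_comm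
      _ = ∑ m : c.support, d m * ∑ a, φ a * Y m m.2 a := Finset.sum_congr rfl fun m _ => this m
      _ = 0 := by
          refine Finset.sum_eq_zero fun m _ => ?_
          rw [hY1 m m.2 φ hφ, mul_zero]
  · intro a ha
    have hOa : 0 < g (fun m => (d m : ℝ)) a := (Set.mem_iInter.1 hgO a) ha
    have hcast : ((∑ m : c.support, d m • Y m m.2) a : ℝ) = g (fun m => (d m : ℝ)) a := by
      rw [hg]
      simp only [Finset.sum_apply, Pi.smul_apply, smul_eq_mul]
      push_cast
      refine Finset.sum_congr rfl fun m _ => ?_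
      exact congrArg _ (congrFun (hY2 m m.2) a)
    exact_mod_cast hcast ▸ hOa

section Dots
variable {ι V : Type} [Fintype ι] [Fintype V] [DecidableEq V] [DecidableEq ι]

private lemma dot_row {K : Type} [Field K] (v : V) (l : ι × Bool) (z : V × V × (ι × Bool) → K) :
    ∑ a : V × V × (ι × Bool), (if a.1 = v ∧ a.2.2 = l then (1:K) else 0) * z a
      = ∑ w, z (v, w, l) := by
  rw [Fintype.sum_prod_type]
  simp [ite_and, Fintype.sum_prod_type, Finset.sum_ite_eq', ite_mul]

private lemma dot_col {K : Type} [Field K] (v : V) (l : ι × Bool) (z : V × V × (ι × Bool) → K) :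
    ∑ a : V × V × (ι × Bool), (if a.2.1 = v ∧ a.2.2 = l then (1:K) else 0) * z a
      = ∑ w, z (w, v, l) := by
  rw [Fintype.sum_prod_type]
  simp [ite_and, Fintype.sum_prod_type, Finset.sum_ite_eq', ite_mul]

private lemma dot_delta {α K : Type} [Fintype α] [DecidableEq α] [Field K] (t : α) (z : α → K) :
    ∑ a : α, (if a = t then (1:K) else 0) * z a = z t := by
  simp [ite_mul]

end Dots

private lemma exists_perm {V : Type} [Fintype V] [DecidableEq V] (Nf : V → V → ℕ) (M : V → ℕ)
    (hrow : ∀ v, ∑ w, Nf v w = M v) (hcol : ∀ v, ∑ w, Nf w v = M v) :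
    ∃ U : Equiv.Perm (Σ v : V, Fin (M v)), ∀ k, 0 < Nf k.1 (U k).1 := by
  classical
  let sw : (Σ v : V, Σ w : V, Fin (Nf v w)) ≃ (Σ w : V, Σ v : V, Fin (Nf v w)) :=
    ⟨fun t => ⟨t.2.1, t.1, t.2.2⟩, fun t => ⟨t.2.1, t.1, t.2.2⟩, fun t => rfl, fun t => rfl⟩
  let e₁ : (Σ v : V, Σ w : V, Fin (Nf v w)) ≃ (Σ v, Fin (M v)) :=
    Equiv.sigmaCongrRight fun v =>
      Fintype.equivFinOfCardEq (by simp [Fintype.card_sigma, hrow v])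
  let e₂ : (Σ v : V, Σ w : V, Fin (Nf v w)) ≃ (Σ w, Fin (M w)) :=
    sw.trans (Equiv.sigmaCongrRight fun w =>
      Fintype.equivFinOfCardEq (by simp [Fintype.card_sigma, hcol w]))
  refine ⟨e₁.symm.trans e₂, fun k => ?_⟩
  have hk : e₁ (e₁.symm k) = k := e₁.apply_symm_apply k
  rcases hvwj : e₁.symm k with ⟨v, w, j⟩
  have hk1 : k.1 = v := by
    rw [hvwj] at hk
    rw [← hk]
    rfl
  have hU1 : ((e₁.symm.trans e₂) k).1 = w := by
    have : (e₁.symm.trans e₂) k = e₂ ⟨v, w, j⟩ := by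
      simp [Equiv.trans_apply, hvwj]
    rw [this]
    rfl
  rw [hk1, hU1]
  exact j.pos

private lemma nat_scale {α : Type} [Fintype α] (q : α → ℚ) (hq : ∀ a, 0 ≤ q a) :
    ∃ (n : α → ℕ) (D : ℕ), 0 < D ∧ ∀ a, (n a : ℚ) = q a * D := by
  classical
  refine ⟨fun a => (q a).num.toNat * ((∏ b, (q b).den) / (q a).den), ∏ b, (q b).den,
    Finset.prod_pos fun b _ => (q b).pos, ?_⟩
  intro a
  have hdvd : (q a).den ∣ ∏ b, (q b).den := Finset.dvd_prod_of_mem _ (mem_univ a)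
  have h0 : ((q a).num.toNat : ℤ) = (q a).num := Int.toNat_of_nonneg (Rat.num_nonneg.2 (hq a))
  have : q a * (∏ b, (q b).den : ℕ) = (q a * (q a).den) * (((∏ b, (q b).den) / (q a).den : ℕ) : ℚ) := by
    rw [mul_assoc]
    congr 1
    rw [← Nat.cast_mul, Nat.mul_div_cancel' hdvd]
  rw [this, Rat.mul_den_eq_num]
  have h0' : (((q a).num.toNat : ℕ) : ℚ) = ((q a).num : ℚ) := by exact_mod_cast h0
  push_cast
  rw [h0']


/-- a nontrivial weight with `W(v₁) > 0` on a finite constraint graph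
yields a periodic treequence `x` in the graph subshift with `x(id) = v₁`. -/
theorem periodic_treequence_of_weight
    {ι V : Type} [Fintype ι] [Fintype V]
    (E : V → V → ι × Bool → Prop)
    (Wv : V → ℝ) (We : V → V → (ι × Bool) → ℝ)
    (hWv : ∀ v, 0 ≤ Wv v) (hWe : ∀ v w l, 0 ≤ We v w l)
    (hsupp : ∀ v w l, ¬ E v w l → We v w l = 0)
    (h1 : ∀ v l, Wv v = ∑ w, We v w l)
    (h2 : ∀ v l, Wv v = ∑ w, We w v l)
    (h3 : ∀ v w l, We v w l = We w v (labInv l))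
    (v₁ : V) (hpos : 0 < Wv v₁) :
    ∃ x : FreeGroup ι → V, InSubshift E x ∧
      (∃ H : Subgroup (FreeGroup ι), H.FiniteIndex ∧
        ∀ f ∈ H, ∀ h : FreeGroup ι, x (f⁻¹ * h) = x h) ∧
      x 1 = v₁ := by
  classical
  rcases isEmpty_or_nonempty ι with hι | hι
  · refine ⟨fun _ => v₁, fun f l => (hι.false l.1).elim, ⟨⊤, ?_, fun f _ h => rfl⟩, rfl⟩
    exact ⟨by simp [Subgroup.index_top]⟩
  · obtain ⟨i₀⟩ := hι
    -- the constraint functionals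
    set er : V → (ι × Bool) → (V × V × (ι × Bool)) → ℚ :=
      fun v l a => if a.1 = v ∧ a.2.2 = l then 1 else 0 with her
    set ec : V → (ι × Bool) → (V × V × (ι × Bool)) → ℚ :=
      fun v l a => if a.2.1 = v ∧ a.2.2 = l then 1 else 0 with hec
    set dl : (V × V × (ι × Bool)) → (V × V × (ι × Bool)) → ℚ :=
      fun t a => if a = t then 1 else 0 with hdl
    set A1 : V × (ι × Bool) × (ι × Bool) → (V × V × (ι × Bool)) → ℚ :=
      fun p => er p.1 p.2.1 - er p.1 p.2.2 with hA1
    set A2 : V × (ι × Bool) → (V × V × (ι × Bool)) → ℚ :=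
      fun p => er p.1 p.2 - ec p.1 p.2 with hA2
    set A3 : V × V × (ι × Bool) → (V × V × (ι × Bool)) → ℚ :=
      fun p => dl p - dl (p.2.1, p.1, labInv p.2.2) with hA3
    set A4 : V × V × (ι × Bool) → (V × V × (ι × Bool)) → ℚ :=
      fun t => if We t.1 t.2.1 t.2.2 = 0 then dl t else 0 with hA4
    set φs : List ((V × V × (ι × Bool)) → ℚ) :=
      univ.toList.map A1 ++ univ.toList.map A2 ++ univ.toList.map A3 ++ univ.toList.map A4
      with hφs
    set x₀ : V × V × (ι × Bool) → ℝ := fun a => We a.1 a.2.1 a.2.2 with hx₀def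
    -- casting the indicator functionals
    have hcast_er : ∀ v l (a : V × V × (ι × Bool)),
        ((er v l a : ℚ) : ℝ) = if a.1 = v ∧ a.2.2 = l then (1:ℝ) else 0 := by
      intro v l a; by_cases h : a.1 = v ∧ a.2.2 = l <;> simp [her, h]
    have hcast_ec : ∀ v l (a : V × V × (ι × Bool)),
        ((ec v l a : ℚ) : ℝ) = if a.2.1 = v ∧ a.2.2 = l then (1:ℝ) else 0 := by
      intro v l a; by_cases h : a.2.1 = v ∧ a.2.2 = l <;> simp [hec, h]
    have hcast_dl : ∀ t (a : V × V × (ι × Bool)),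
        ((dl t a : ℚ) : ℝ) = if a = t then (1:ℝ) else 0 := by
      intro t a; by_cases h : a = t <;> simp [hdl, h]
    -- x₀ satisfies the constraints
    have hx0 : ∀ φ ∈ φs, ∑ a, (φ a : ℝ) * x₀ a = 0 := by
      intro φ hφ
      rw [hφs] at hφ
      simp only [List.mem_append, List.mem_map, Finset.mem_toList] at hφ
      rcases hφ with ((⟨p, -, rfl⟩ | ⟨p, -, rfl⟩) | ⟨p, -, rfl⟩) | ⟨p, -, rfl⟩
      · have : ∀ a, ((A1 p a : ℚ) : ℝ) * x₀ a
            = (if a.1 = p.1 ∧ a.2.2 = p.2.1 then (1:ℝ) else 0) * x₀ a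
              - (if a.1 = p.1 ∧ a.2.2 = p.2.2 then (1:ℝ) else 0) * x₀ a := by
          intro a
          rw [hA1]
          push_cast [Pi.sub_apply, hcast_er]
          ring
        rw [Finset.sum_congr rfl fun a _ => this a, Finset.sum_sub_distrib,
          dot_row, dot_row]
        simp only [hx₀def]
        rw [← h1 p.1 p.2.1, ← h1 p.1 p.2.2, sub_self]
      · have : ∀ a, ((A2 p a : ℚ) : ℝ) * x₀ a
            = (if a.1 = p.1 ∧ a.2.2 = p.2 then (1:ℝ) else 0) * x₀ a
              - (if a.2.1 = p.1 ∧ a.2.2 = p.2 then (1:ℝ) else 0) * x₀ a := by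
          intro a
          rw [hA2]
          push_cast [Pi.sub_apply, hcast_er, hcast_ec]
          ring
        rw [Finset.sum_congr rfl fun a _ => this a, Finset.sum_sub_distrib,
          dot_row, dot_col]
        simp only [hx₀def]
        rw [← h1 p.1 p.2, ← h2 p.1 p.2, sub_self]
      · have : ∀ a, ((A3 p a : ℚ) : ℝ) * x₀ a
            = (if a = p then (1:ℝ) else 0) * x₀ a
              - (if a = (p.2.1, p.1, labInv p.2.2) then (1:ℝ) else 0) * x₀ a := by
          intro a
          rw [hA3]
          push_cast [Pi.sub_apply, hcast_dl]
          ring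
        rw [Finset.sum_congr rfl fun a _ => this a, Finset.sum_sub_distrib,
          dot_delta, dot_delta]
        simp only [hx₀def]
        rw [h3 p.1 p.2.1 p.2.2]
        exact sub_self _
      · by_cases h : We p.1 p.2.1 p.2.2 = 0
        · have : A4 p = dl p := by simp only [hA4]; rw [if_pos h]
          rw [this]
          have : ∀ a, ((dl p a : ℚ) : ℝ) * x₀ a = (if a = p then (1:ℝ) else 0) * x₀ a := by
            intro a; rw [hcast_dl]
          rw [Finset.sum_congr rfl fun a _ => this a, dot_delta]
          exact h
        · have : A4 p = 0 := by simp only [hA4]; rw [if_neg h]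
          rw [this]
          simp
    obtain ⟨q, hqcon, hqpos⟩ := rat_point' φs x₀ hx0 (fun a => hWe _ _ _)
    -- extract the properties of q
    have hmem1 : ∀ p : V × (ι × Bool) × (ι × Bool), A1 p ∈ φs := by
      intro p; rw [hφs]
      simp [List.mem_append, List.mem_map]
    have hmem2 : ∀ p : V × (ι × Bool), A2 p ∈ φs := by
      intro p; rw [hφs]; simp [List.mem_append, List.mem_map]
    have hmem3 : ∀ p : V × V × (ι × Bool), A3 p ∈ φs := by
      intro p; rw [hφs]; simp [List.mem_append, List.mem_map]
    have hmem4 : ∀ p : V × V × (ι × Bool), A4 p ∈ φs := by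
      intro p; rw [hφs]; simp [List.mem_append, List.mem_map]
    have hq0 : ∀ t : V × V × (ι × Bool), We t.1 t.2.1 t.2.2 = 0 → q t = 0 := by
      intro t ht
      have := hqcon (A4 t) (hmem4 t)
      simp only [hA4] at this
      rw [if_pos ht] at this
      simp only [hdl] at this
      rwa [dot_delta t q] at this
    have hqP : ∀ t : V × V × (ι × Bool), We t.1 t.2.1 t.2.2 ≠ 0 → 0 < q t := fun t ht =>
      hqpos t ht
    have hqnn : ∀ t, 0 ≤ q t := by
      intro t
      by_cases h : We t.1 t.2.1 t.2.2 = 0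
      · rw [hq0 t h]
      · exact le_of_lt (hqP t h)
    have hq1 : ∀ (v : V) (l l' : ι × Bool), ∑ w, q (v,w,l) = ∑ w, q (v,w,l') := by
      intro v l l'
      have hc := hqcon (A1 (v,l,l')) (hmem1 _)
      simp only [hA1, Pi.sub_apply, her] at hc
      rw [Finset.sum_congr rfl (fun a _ => sub_mul _ _ (q a)), Finset.sum_sub_distrib,
        dot_row, dot_row] at hc
      linarith
    have hq2 : ∀ (v : V) (l : ι × Bool), ∑ w, q (v,w,l) = ∑ w, q (w,v,l) := by
      intro v l
      have hc := hqcon (A2 (v,l)) (hmem2 _)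
      simp only [hA2, Pi.sub_apply, her, hec] at hc
      rw [Finset.sum_congr rfl (fun a _ => sub_mul _ _ (q a)), Finset.sum_sub_distrib,
        dot_row, dot_col] at hc
      linarith
    have hq3 : ∀ (v w : V) (l : ι × Bool), q (v,w,l) = q (w,v,labInv l) := by
      intro v w l
      have hc := hqcon (A3 (v,w,l)) (hmem3 _)
      simp only [hA3, Pi.sub_apply, hdl] at hc
      rw [Finset.sum_congr rfl (fun a _ => sub_mul _ _ (q a)), Finset.sum_sub_distrib,
        dot_delta, dot_delta] at hc
      linarith
    obtain ⟨n, D, hD, hnq⟩ := nat_scale q hqnn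
    have hcastsum : ∀ (g : V → V × V × (ι × Bool)),
        ((∑ w, n (g w) : ℕ) : ℚ) = (∑ w, q (g w)) * D := by
      intro g
      push_cast
      rw [Finset.sum_mul]
      exact Finset.sum_congr rfl fun w _ => hnq (g w)
    have hn1 : ∀ (v : V) (l l' : ι × Bool), ∑ w, n (v,w,l) = ∑ w, n (v,w,l') := by
      intro v l l'
      have : ((∑ w, n (v,w,l) : ℕ) : ℚ) = ((∑ w, n (v,w,l') : ℕ) : ℚ) := by
        rw [hcastsum (fun w => (v,w,l)), hcastsum (fun w => (v,w,l')), hq1 v l l']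
      exact_mod_cast this
    have hn2 : ∀ (v : V) (l : ι × Bool), ∑ w, n (v,w,l) = ∑ w, n (w,v,l) := by
      intro v l
      have : ((∑ w, n (v,w,l) : ℕ) : ℚ) = ((∑ w, n (w,v,l) : ℕ) : ℚ) := by
        rw [hcastsum (fun w => (v,w,l)), hcastsum (fun w => (w,v,l)), hq2 v l]
      exact_mod_cast this
    have hn3 : ∀ (v w : V) (l : ι × Bool), n (v,w,l) = n (w,v,labInv l) := by
      intro v w l
      have : ((n (v,w,l) : ℕ) : ℚ) = ((n (w,v,labInv l) : ℕ) : ℚ) := by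
        rw [hnq, hnq, hq3 v w l]
      exact_mod_cast this
    have hnE : ∀ t : V × V × (ι × Bool), 0 < n t → E t.1 t.2.1 t.2.2 := by
      intro t ht
      by_contra hE
      have hwz : We t.1 t.2.1 t.2.2 = 0 := hsupp _ _ _ hE
      have hqz : q t = 0 := hq0 t hwz
      have : (n t : ℚ) = 0 := by rw [hnq, hqz, zero_mul]
      have : n t = 0 := by exact_mod_cast this
      omega
    have hnWe : ∀ t : V × V × (ι × Bool), We t.1 t.2.1 t.2.2 ≠ 0 → 0 < n t := by
      intro t ht
      have hq := hqP t ht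
      have : (0:ℚ) < (n t : ℚ) := by
        rw [hnq]
        have : (0:ℚ) < (D:ℚ) := by exact_mod_cast hD
        positivity
      exact_mod_cast this
    set M : V → ℕ := fun v => ∑ w, n (v,w,(i₀,true)) with hM
    have hrow : ∀ (v : V) (l : ι × Bool), ∑ w, n (v,w,l) = M v := fun v l => hn1 v l (i₀,true)
    have hcol : ∀ (v : V) (l : ι × Bool), ∑ w, n (w,v,l) = M v := fun v l =>
      (hn2 v l).symm.trans (hrow v l)
    have hMv₁ : 0 < M v₁ := by
      have hex : ∃ w, We v₁ w (i₀,true) ≠ 0 := by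
        by_contra hall
        push_neg at hall
        rw [h1 v₁ (i₀,true)] at hpos
        simp only [hall, Finset.sum_const_zero, lt_self_iff_false] at hpos
      obtain ⟨w₀, hw₀⟩ := hex
      have h0 := hnWe (v₁, w₀, (i₀,true)) hw₀
      calc 0 < n (v₁,w₀,(i₀,true)) := h0
        _ ≤ M v₁ := by simp only [hM]; exact Finset.single_le_sum (f := fun w => n (v₁, w, (i₀,true))) (fun _ _ => Nat.zero_le _) (mem_univ w₀)
    have hUex : ∀ i : ι, ∃ U : Equiv.Perm (Σ v : V, Fin (M v)),
        ∀ k, 0 < n (k.1, (U k).1, (i,true)) :=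
      fun i => exists_perm (fun v w => n (v,w,(i,true))) M (fun v => hrow v _)
        (fun v => hcol v _)
    choose U hU using hUex
    set φh : FreeGroup ι →* Equiv.Perm (Σ v : V, Fin (M v)) :=
      FreeGroup.lift (fun i => (U i)⁻¹) with hφh
    set k₀ : (Σ v : V, Fin (M v)) := ⟨v₁, ⟨0, hMv₁⟩⟩ with hk₀
    have key : ∀ (k : Σ v : V, Fin (M v)) (l : ι × Bool),
        E k.1 (((φh (genElem l))⁻¹ k).1) l := by
      intro k l
      obtain ⟨i, b⟩ := l
      cases b
      · have hg : (φh (genElem ((i,false) : ι × Bool)))⁻¹ = (U i)⁻¹ := by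
          have : genElem ((i,false) : ι × Bool) = (FreeGroup.of i)⁻¹ := by
            simp [genElem]
          rw [this, map_inv, hφh, FreeGroup.lift_apply_of, inv_inv]
        rw [hg]
        have h0 := hU i ((U i)⁻¹ k)
        rw [Equiv.Perm.coe_inv, Equiv.apply_symm_apply] at h0
        rw [hn3] at h0
        exact hnE (k.1, (((U i)⁻¹) k).1, (i,false)) h0
      · have hg : (φh (genElem ((i,true) : ι × Bool)))⁻¹ = U i := by
          have : genElem ((i,true) : ι × Bool) = FreeGroup.of i := by
            simp [genElem]
          rw [this, hφh, FreeGroup.lift_apply_of, inv_inv]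
        rw [hg]
        exact hnE (k.1, (U i k).1, (i,true)) (hU i k)
    refine ⟨fun f => ((φh f⁻¹) k₀).1, ?_, ⟨φh.ker, ?_, ?_⟩, ?_⟩
    · intro f l
      show E ((φh f⁻¹ k₀).1) ((φh (f*genElem l)⁻¹ k₀).1) l
      have hmul : φh (f * genElem l)⁻¹ k₀ = (φh (genElem l))⁻¹ (φh f⁻¹ k₀) := by
        rw [mul_inv_rev, map_mul, ← map_inv]
        rfl
      rw [hmul]
      exact key _ l
    · haveI : Finite (Equiv.Perm (Σ v : V, Fin (M v))) :=
        Finite.of_injective (fun e => (e : (Σ v : V, Fin (M v)) → (Σ v : V, Fin (M v))))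
          DFunLike.coe_injective
      haveI : Nonempty φh.range := ⟨⟨1, 1, map_one φh⟩⟩
      refine ⟨?_⟩
      rw [Subgroup.index_ker]
      exact Nat.card_pos.ne'
    · intro f hf h
      have hf1 : φh f = 1 := (MonoidHom.mem_ker).1 hf
      show ((φh (f⁻¹*h)⁻¹) k₀).1 = ((φh h⁻¹) k₀).1
      rw [mul_inv_rev, inv_inv, map_mul]
      have : (φh h⁻¹ * φh f) k₀ = (φh h⁻¹) ((φh f) k₀) := rfl
      rw [this, hf1]
      rfl
    · show ((φh 1⁻¹) k₀).1 = v₁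
      rw [inv_one, map_one]
      rfl
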